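/- Let G be a finite group with Sylow p-subgroup P of maximal class, |P| = p³, and let N ⊴ G with |N|_p = p². Then for every element x ∈ P \ N, no G-conjugate of x lies in N, and |C_G(x)|_p = p². -/

import Mathlib

open Pointwise

/-- Let `G` be finite with Sylow `p`-subgroup `P` of maximal class with `|P| = p³`
(i.e. `P` is non-abelian of order `p³`), and `N ⊴ G` with `|N|_p = p²`. Then no
`G`-conjugate of any `x ∈ P \ N` lies in `N`, and `|C_G(x)|_p = p²`. -/
theorem stmt9 (p : ℕ) [Fact p.Prime] (G : Type*) [Group G] [Finite G]
    (P : Sylow p G) (hcard : Nat.card P = p ^ 3)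
    (hmaxclass : ¬ ∀ a b : P, a * b = b * a)
    (N : Subgroup G) (hN : N.Normal) (hNp : (Nat.card N).factorization p = 2)
    (x : G) (hxP : x ∈ P) (hxN : x ∉ N) :
    (∀ g : G, g * x * g⁻¹ ∉ N) ∧
      (Nat.card (Subgroup.centralizer {x})).factorization p = 2 := by
  have hp : p.Prime := Fact.out
  have part1 : ∀ g : G, g * x * g⁻¹ ∉ N := by
    intro g h
    have := hN.conj_mem _ h g⁻¹
    simp [mul_assoc] at this
    exact hxN this
  refine ⟨part1, ?_⟩
  -- p-part of |G| is 3
  have hG3 : (Nat.card G).factorization p = 3 := by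
    have h := P.card_eq_multiplicity
    rw [hcard] at h
    exact (Nat.pow_right_injective hp.two_le h).symm
  have hNpos : Nat.card N ≠ 0 := Nat.card_pos.ne'
  have hIdxpos : N.index ≠ 0 := by
    have := N.card_mul_index
    intro h
    rw [h, mul_zero] at this
    exact Nat.card_pos.ne' this.symm
  have hIdx : (N.index).factorization p = 1 := by
    have hmul := N.card_mul_index
    have := congrArg (fun n => n.factorization p) hmul
    simp only [Nat.factorization_mul hNpos hIdxpos, Finsupp.add_apply, hNp, hG3] at this
    omega
  -- every Sylow has cardinality p^3
  have hcardQ : ∀ Q : Sylow p G, Nat.card Q = p ^ 3 := fun Q => by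
    rw [Q.card_eq_multiplicity, hG3]
  -- intersection with N has cardinality p^2
  have hinf : ∀ Q : Sylow p G, Nat.card ↥(N ⊓ (Q : Subgroup G)) = p ^ 2 := by
    intro Q
    have hMle : N ⊓ (Q : Subgroup G) ≤ Q := inf_le_right
    have hdvd : Nat.card ↥(N ⊓ (Q : Subgroup G)) ∣ p ^ 3 := by
      have := Subgroup.card_dvd_of_le hMle
      rwa [hcardQ Q] at this
    obtain ⟨k, hk3, hkcard⟩ := (Nat.dvd_prime_pow hp).mp hdvd
    have hk2 : k ≤ 2 := by
      have h1 : p ^ k ∣ Nat.card N := hkcard ▸ Subgroup.card_dvd_of_le inf_le_left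
      have := (hp.pow_dvd_iff_le_factorization hNpos).mp h1
      omega
    have hrel : Nat.card ↥(N ⊓ (Q : Subgroup G)) * N.relIndex Q = p ^ 3 := by
      rw [← Subgroup.inf_relIndex_right]
      have e1 : Nat.card ↥(N ⊓ (Q : Subgroup G))
          = Nat.card ((N ⊓ (Q : Subgroup G)).subgroupOf Q) :=
        Nat.card_congr (Subgroup.subgroupOfEquivOfLe hMle).symm.toEquiv
      rw [e1, Subgroup.relIndex, Subgroup.card_mul_index, hcardQ]
    have hrelval : N.relIndex Q = p ^ (3 - k) := by
      have hpow : p ^ k * p ^ (3 - k) = p ^ 3 := by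
        rw [← pow_add]; congr 1; omega
      rw [hkcard] at hrel
      exact Nat.eq_of_mul_eq_mul_left (pow_pos hp.pos k) (by rw [hrel, hpow])
    have hdvd2 : p ^ (3 - k) ∣ N.index := hrelval ▸ Subgroup.relIndex_dvd_index_of_normal N Q
    have := (hp.pow_dvd_iff_le_factorization hIdxpos).mp hdvd2
    rw [hIdx] at this
    have hk : k = 2 := by omega
    rw [hkcard, hk]
  -- non-abelianness transfers to all Sylows
  have nonab : ∀ Q : Sylow p G, ¬ ∀ a b : (Q : Subgroup G), a * b = b * a := by
    intro Q hQ
    apply hmaxclass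
    obtain ⟨g, hg⟩ := MulAction.exists_smul_eq G Q P
    have hco : (MulAut.conj g • (Q : Subgroup G)) = (P : Subgroup G) := by
      rw [← hg]; rfl
    let e : ↥(Q : Subgroup G) ≃* ↥(P : Subgroup G) :=
      (Subgroup.equivSMul (MulAut.conj g) (Q : Subgroup G)).trans (MulEquiv.subgroupCongr hco)
    intro a b
    have h := hQ (e.symm a) (e.symm b)
    calc a * b = e (e.symm a) * e (e.symm b) := by rw [e.apply_symm_apply, e.apply_symm_apply]
      _ = e (e.symm a * e.symm b) := (e.map_mul _ _).symm
      _ = e (e.symm b * e.symm a) := by rw [h]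
      _ = b * a := by rw [e.map_mul, e.apply_symm_apply, e.apply_symm_apply]
  -- an element of a Sylow Q centralizing all of Q lies in N
  have central : ∀ Q : Sylow p G, ∀ y : G, y ∈ Q →
      (∀ z ∈ (Q : Subgroup G), y * z = z * y) → y ∈ N := by
    intro Q y hyQ hyc
    by_contra hyN
    apply nonab Q
    set M := N ⊓ (Q : Subgroup G) with hMdef
    have hMcard := hinf Q
    have hMcomm : ∀ a b : ↥M, a * b = b * a :=
      IsPGroup.commutative_of_card_eq_prime_sq hMcard
    have hyM : y ∉ M := fun h => hyN h.1
    set K := M ⊔ Subgroup.zpowers y with hKdef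
    have hKQ : K ≤ Q := sup_le inf_le_right (Subgroup.zpowers_le.mpr hyQ)
    have hMK : M ≤ K := le_sup_left
    have hyK : y ∈ K := Subgroup.mem_sup_right (Subgroup.mem_zpowers y)
    -- K = Q
    have hKQeq : K = (Q : Subgroup G) := by
      have hKdvd : Nat.card K ∣ p ^ 3 := by
        have := Subgroup.card_dvd_of_le hKQ
        rwa [hcardQ Q] at this
      obtain ⟨j, hj3, hjcard⟩ := (Nat.dvd_prime_pow hp).mp hKdvd
      have hMdvdK : p ^ 2 ∣ p ^ j := by
        have := Subgroup.card_dvd_of_le hMK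
        rwa [hMcard, hjcard] at this
      have hj2 : 2 ≤ j := (Nat.pow_dvd_pow_iff_le_right hp.one_lt).mp hMdvdK
      have hjne : j ≠ 2 := by
        intro hj
        have : M = K := Subgroup.eq_of_le_of_card_ge hMK (by rw [hMcard, hjcard, hj])
        exact hyM (this ▸ hyK)
      have hj' : j = 3 := by omega
      exact Subgroup.eq_of_le_of_card_ge hKQ (by rw [hjcard, hj', ← hcardQ Q])
    -- everything in M commutes with everything in Q
    have step1 : ∀ m ∈ M, ∀ z ∈ (Q : Subgroup G), m * z = z * m := by
      intro m hm
      have hle : (Q : Subgroup G) ≤ Subgroup.centralizer {m} := by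
        rw [← hKQeq]
        apply sup_le
        · intro a ha
          rw [Subgroup.mem_centralizer_iff]
          intro g hg
          rw [Set.mem_singleton_iff] at hg
          rw [hg]
          exact congrArg Subtype.val (hMcomm ⟨m, hm⟩ ⟨a, ha⟩)
        · rw [Subgroup.zpowers_le, Subgroup.mem_centralizer_iff]
          intro g hg
          rw [Set.mem_singleton_iff] at hg
          rw [hg]
          exact (hyc m hm.2).symm
      intro z hz
      exact Subgroup.mem_centralizer_iff.mp (hle hz) m rfl
    -- Q is abelian
    intro a b
    have hb : (Q : Subgroup G) ≤ Subgroup.centralizer {(b : G)} := by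
      refine le_trans (le_of_eq hKQeq.symm) ?_
      apply sup_le
      · intro m hm
        rw [Subgroup.mem_centralizer_iff]
        intro g hg
        rw [Set.mem_singleton_iff] at hg
        rw [hg]
        exact (step1 m hm b b.2).symm
      · rw [Subgroup.zpowers_le, Subgroup.mem_centralizer_iff]
        intro g hg
        rw [Set.mem_singleton_iff] at hg
        rw [hg]
        exact (hyc b b.2).symm
    have := Subgroup.mem_centralizer_iff.mp (hb a.2) b rfl
    exact Subtype.ext this.symm
  -- the centralizer of x
  have hxC : x ∈ Subgroup.centralizer {x} := by
    rw [Subgroup.mem_centralizer_iff]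
    intro g hg
    rw [Set.mem_singleton_iff] at hg
    rw [hg]
  set C := Subgroup.centralizer {x} with hCdef
  have hCpos : Nat.card C ≠ 0 := Nat.card_pos.ne'
  -- x is a p-element
  have hxp : ∃ k, x ^ p ^ k = 1 := by
    obtain ⟨k, hk⟩ := P.2 ⟨x, hxP⟩
    exact ⟨k, by simpa using congrArg Subtype.val hk⟩
  -- upper bound: factorization ≤ 2
  have hupper : (Nat.card C).factorization p ≤ 2 := by
    by_contra hcon
    push_neg at hcon
    have hfle : (Nat.card C).factorization p ≤ 3 := by
      have h1 : p ^ (Nat.card C).factorization p ∣ Nat.card C :=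
        Nat.ordProj_dvd _ p
      have h2 : Nat.card C ∣ Nat.card G := Subgroup.card_subgroup_dvd_card C
      have := (hp.pow_dvd_iff_le_factorization Nat.card_pos.ne').mp (h1.trans h2)
      omega
    have hf3 : (Nat.card C).factorization p = 3 := by omega
    set x' : ↥C := ⟨x, hxC⟩ with hx'def
    have hordx : ∃ k, orderOf x' = p ^ k := by
      obtain ⟨k, hk⟩ := hxp
      have hdvd : orderOf x' ∣ p ^ k :=
        orderOf_dvd_of_pow_eq_one (Subtype.ext (by push_cast; exact hk))
      obtain ⟨j, _, hj⟩ := (Nat.dvd_prime_pow hp).mp hdvd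
      exact ⟨j, hj⟩
    obtain ⟨k, hk⟩ := hordx
    have hZ : IsPGroup p (Subgroup.zpowers x') :=
      IsPGroup.of_card (by rw [Nat.card_zpowers, hk])
    obtain ⟨S, hle⟩ := hZ.exists_le_sylow
    have hScard : Nat.card S = p ^ 3 := by
      rw [S.card_eq_multiplicity, hf3]
    set S' := Subgroup.map C.subtype (S : Subgroup ↥C) with hS'def
    have hS'card : Nat.card S' = p ^ 3 := by
      rw [← hScard]
      exact (Nat.card_congr
        ((S : Subgroup ↥C).equivMapOfInjective C.subtype C.subtype_injective).toEquiv).symm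
    let QS : Sylow p G := Sylow.ofCard S' (by rw [hS'card, hG3])
    have hQS : (QS : Subgroup G) = S' := rfl
    have hxS' : x ∈ S' := ⟨x', hle (Subgroup.mem_zpowers x'), rfl⟩
    have hxN' : x ∈ N := by
      apply central QS x (by exact hxS')
      intro z hz
      rw [hQS] at hz
      obtain ⟨w, hw, rfl⟩ := hz
      exact Subgroup.mem_centralizer_iff.mp w.2 x rfl
    exact hxN hxN'
  -- lower bound: factorization ≥ 2
  have hlower : 2 ≤ (Nat.card C).factorization p := by
    have : Nontrivial ↥(P : Subgroup G) := by
      rw [← Finite.one_lt_card_iff_nontrivial]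
      have : (1 : ℕ) < p ^ 3 := Nat.one_lt_pow (by norm_num) hp.one_lt
      rw [show Nat.card ↥(P : Subgroup G) = p ^ 3 from hcard]
      exact this
    have hcenter : Nontrivial (Subgroup.center ↥(P : Subgroup G)) :=
      P.isPGroup'.center_nontrivial
    set ZP := Subgroup.map (P : Subgroup G).subtype (Subgroup.center ↥(P : Subgroup G))
      with hZPdef
    have hZPcard : 1 < Nat.card ZP := by
      rw [← Nat.card_congr ((Subgroup.center ↥(P : Subgroup G)).equivMapOfInjective
        (P : Subgroup G).subtype (P : Subgroup G).subtype_injective).toEquiv]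
      exact Finite.one_lt_card
    set K := ZP ⊔ Subgroup.zpowers x with hKdef
    have hKP : K ≤ (P : Subgroup G) :=
      sup_le (Subgroup.map_subtype_le _) (Subgroup.zpowers_le.mpr hxP)
    have hKC : K ≤ C := by
      apply sup_le
      · intro z hz
        obtain ⟨w, hw, rfl⟩ := hz
        rw [Subgroup.mem_centralizer_iff]
        intro g hg
        rw [Set.mem_singleton_iff] at hg
        rw [hg]
        have h2 := congrArg Subtype.val ((Subgroup.mem_center_iff.mp hw) ⟨x, hxP⟩)
        simp only [Subgroup.coe_mul] at h2
        exact h2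
      · rw [Subgroup.zpowers_le, Subgroup.mem_centralizer_iff]
        intro g hg
        rw [Set.mem_singleton_iff] at hg
        rw [hg]
    have hKdvd : Nat.card K ∣ p ^ 3 := by
      have := Subgroup.card_dvd_of_le hKP
      rwa [show Nat.card ↥(P : Subgroup G) = p ^ 3 from hcard] at this
    obtain ⟨j, hj3, hjcard⟩ := (Nat.dvd_prime_pow hp).mp hKdvd
    have hZPK : ZP ≤ K := le_sup_left
    have hZPdvd : Nat.card ZP ∣ p ^ j := by
      have := Subgroup.card_dvd_of_le hZPK
      rwa [hjcard] at this
    have hj1 : 1 ≤ j := by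
      rcases Nat.eq_zero_or_pos j with hj0 | hj0
      · rw [hj0, pow_zero, Nat.dvd_one] at hZPdvd
        omega
      · exact hj0
    have hj2 : 2 ≤ j := by
      by_contra hcon
      have hj : j = 1 := by omega
      rw [hj, pow_one] at hjcard hZPdvd
      have hZPp : Nat.card ZP = p :=
        (Nat.Prime.eq_one_or_self_of_dvd hp _ hZPdvd).resolve_left (by omega)
      have hZPK' : ZP = K :=
        Subgroup.eq_of_le_of_card_ge hZPK (by rw [hZPp, hjcard])
      have hxZP : x ∈ ZP := hZPK' ▸ Subgroup.mem_sup_right (Subgroup.mem_zpowers x)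
      obtain ⟨w, hw, hwx⟩ := hxZP
      have : x ∈ N := by
        apply central P x hxP
        intro z hz
        have := (Subgroup.mem_center_iff.mp hw) ⟨z, hz⟩
        have h2 := congrArg Subtype.val this
        simp only [Subgroup.coe_mul] at h2
        rw [show ((w : G)) = x from hwx] at h2
        exact h2.symm
      exact hxN this
    have hp2K : p ^ 2 ∣ Nat.card C := by
      have h1 : p ^ 2 ∣ Nat.card K := by
        rw [hjcard]; exact pow_dvd_pow p hj2
      exact h1.trans (Subgroup.card_dvd_of_le hKC)
    exact (hp.pow_dvd_iff_le_factorization hCpos).mp hp2K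
  omega
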